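/- For independent Poisson random variables Y_1, …, Y_N with means μ_i > 0 and bounded functions h_i : ℕ^N → ℝ, the 'optimism' E[∑_i Y_i h_i(Y)] − E[∑_i μ_i h_i(Y)] equals E[∑_i Y_i (h_i(Y) − h_i(Y^{(Y_i−1)}))], and if each h_i is coordinatewise nondecreasing in the i-th argument, this optimism is nonnegative. -/

import Mathlib

open scoped BigOperators

noncomputable def poissonPMF (μ : ℝ) (k : ℕ) : ℝ :=
  Real.exp (-μ) * μ ^ k / (Nat.factorial k)

noncomputable def poissonWeight {N : ℕ} (μ : Fin N → ℝ) (y : Fin N → ℕ) : ℝ :=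
  ∏ i, poissonPMF (μ i) (y i)

lemma poissonPMF_nonneg {μ : ℝ} (hμ : 0 ≤ μ) (k : ℕ) : 0 ≤ poissonPMF μ k := by
  unfold poissonPMF; positivity

lemma poissonPMF_summable (μ : ℝ) : Summable (poissonPMF μ) := by
  refine ((Real.summable_pow_div_factorial μ).mul_left (Real.exp (-μ))).congr fun k => ?_
  simp [poissonPMF, mul_div_assoc]

lemma succ_mul_poissonPMF (μ : ℝ) (k : ℕ) :
    ((k : ℝ) + 1) * poissonPMF μ (k + 1) = μ * poissonPMF μ k := by
  have hk : (Nat.factorial k : ℝ) ≠ 0 := Nat.cast_ne_zero.2 (Nat.factorial_ne_zero k)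
  unfold poissonPMF
  rw [Nat.factorial_succ, pow_succ]
  push_cast
  field_simp

lemma summable_mul_poissonPMF (μ : ℝ) : Summable (fun k : ℕ => (k : ℝ) * poissonPMF μ k) := by
  rw [← summable_nat_add_iff 1]
  refine ((poissonPMF_summable μ).mul_left μ).congr fun k => ?_
  push_cast
  exact (succ_mul_poissonPMF μ k).symm

lemma summable_pi_prod : ∀ {N : ℕ} (g : Fin N → ℕ → ℝ),
    (∀ i k, 0 ≤ g i k) → (∀ i, Summable (g i)) →
    Summable (fun y : Fin N → ℕ => ∏ i, g i (y i))
  | 0, g, _, _ => Summable.of_finite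
  | (N+1), g, hnn, hs => by
      have ih := summable_pi_prod (fun i => g i.succ) (fun i k => hnn i.succ k)
        (fun i => hs i.succ)
      refine ((Fin.consEquiv (fun _ : Fin (N+1) => ℕ)).summable_iff).1 ?_
      refine (Summable.mul_of_nonneg (hs 0) ih (fun k => hnn 0 k)
        (fun y => Finset.prod_nonneg fun i _ => hnn i.succ (y i))).congr fun p => ?_
      simp [Fin.consEquiv, Fin.prod_univ_succ]

section helpers

variable {N : ℕ} {μ : Fin N → ℝ}

lemma weight_split (μ : Fin N → ℝ) (i : Fin N) (y : Fin N → ℕ) :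
    poissonWeight μ y
      = poissonPMF (μ i) (y i) * ∏ j ∈ Finset.univ.erase i, poissonPMF (μ j) (y j) := by
  rw [poissonWeight, ← Finset.mul_prod_erase Finset.univ _ (Finset.mem_univ i)]

lemma weight_nonneg (hμ : ∀ i, 0 < μ i) (y : Fin N → ℕ) : 0 ≤ poissonWeight μ y :=
  Finset.prod_nonneg fun i _ => poissonPMF_nonneg (hμ i).le _

lemma summable_weight (μ : Fin N → ℝ) (hμ : ∀ i, 0 < μ i) : Summable (poissonWeight μ) :=
  summable_pi_prod _ (fun i k => poissonPMF_nonneg (hμ i).le k)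
    (fun i => poissonPMF_summable (μ i))

lemma summable_coord (μ : Fin N → ℝ) (hμ : ∀ i, 0 < μ i) (i : Fin N) :
    Summable (fun y : Fin N → ℕ => (y i : ℝ) * poissonWeight μ y) := by
  classical
  have hsum : Summable (fun y : Fin N → ℕ => ∏ j,
      Function.update (fun j k => poissonPMF (μ j) k) i
        (fun k => (k : ℝ) * poissonPMF (μ i) k) j (y j)) := by
    refine summable_pi_prod _ (fun j k => ?_) (fun j => ?_)
    · rcases eq_or_ne j i with rfl | hj
      · simp only [Function.update_self]
        exact mul_nonneg (Nat.cast_nonneg _) (poissonPMF_nonneg (hμ j).le k)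
      · simp only [Function.update_of_ne hj]
        exact poissonPMF_nonneg (hμ j).le k
    · rcases eq_or_ne j i with rfl | hj
      · simpa only [Function.update_self] using summable_mul_poissonPMF (μ j)
      · simpa only [Function.update_of_ne hj] using poissonPMF_summable (μ j)
  refine hsum.congr fun y => ?_
  rw [weight_split μ i, ← Finset.mul_prod_erase Finset.univ _ (Finset.mem_univ i)]
  simp only [Function.update_self]
  rw [mul_assoc]
  refine congrArg _ (congrArg _ (Finset.prod_congr rfl fun j hj => ?_))
  rw [Function.update_of_ne (Finset.ne_of_mem_erase hj)]

lemma stein (hμ : ∀ i, 0 < μ i) (i : Fin N) (f : (Fin N → ℕ) → ℝ) :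
    ∑' y : Fin N → ℕ, (y i : ℝ) * f (Function.update y i (y i - 1)) * poissonWeight μ y
      = ∑' y : Fin N → ℕ, μ i * f y * poissonWeight μ y := by
  classical
  have hinj : Function.Injective (fun y : Fin N → ℕ => Function.update y i (y i + 1)) := by
    intro a b hab
    have h' : ∀ j, Function.update a i (a i + 1) j = Function.update b i (b i + 1) j :=
      fun j => congrFun hab j
    funext j
    rcases eq_or_ne j i with rfl | hj
    · have := h' j; simpa using this
    · have := h' j; simpa [Function.update_of_ne hj] using this
  have hsupp : Function.support (fun y : Fin N → ℕ =>
      (y i : ℝ) * f (Function.update y i (y i - 1)) * poissonWeight μ y)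
      ⊆ Set.range (fun y : Fin N → ℕ => Function.update y i (y i + 1)) := by
    intro y hy
    have hyi : y i ≠ 0 := by
      intro h0
      apply hy
      simp [h0]
    refine ⟨Function.update y i (y i - 1), ?_⟩
    simp only [Function.update_self, Function.update_idem]
    rw [Nat.sub_add_cancel (Nat.one_le_iff_ne_zero.2 hyi), Function.update_eq_self]
  have key : ∀ y : Fin N → ℕ,
      ((Function.update y i (y i + 1) i : ℕ) : ℝ)
        * f (Function.update (Function.update y i (y i + 1)) i
            (Function.update y i (y i + 1) i - 1))
        * poissonWeight μ (Function.update y i (y i + 1))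
      = μ i * f y * poissonWeight μ y := by
    intro y
    have h2 : Function.update (Function.update y i (y i + 1)) i
        (Function.update y i (y i + 1) i - 1) = y := by
      simp [Function.update_idem]
    rw [h2, Function.update_self]
    have h3 : poissonWeight μ (Function.update y i (y i + 1))
        = poissonPMF (μ i) (y i + 1) * ∏ j ∈ Finset.univ.erase i, poissonPMF (μ j) (y j) := by
      rw [weight_split μ i, Function.update_self]
      refine congrArg _ (Finset.prod_congr rfl fun j hj => ?_)
      rw [Function.update_of_ne (Finset.ne_of_mem_erase hj)]
    rw [h3, weight_split μ i y]
    push_cast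
    linear_combination (f y * ∏ j ∈ Finset.univ.erase i, poissonPMF (μ j) (y j)) *
      succ_mul_poissonPMF (μ i) (y i)
  rw [← hinj.tsum_eq hsupp]
  exact tsum_congr key

end helpers

theorem optimism_identity_and_positivity {N : ℕ} (μ : Fin N → ℝ) (hμ : ∀ i, 0 < μ i)
    (h : Fin N → (Fin N → ℕ) → ℝ) (hbdd : ∀ i, ∃ C : ℝ, ∀ y, |h i y| ≤ C) :
    ((∑' y : Fin N → ℕ, (∑ i, (y i : ℝ) * h i y) * poissonWeight μ y)
        - ∑' y : Fin N → ℕ, (∑ i, μ i * h i y) * poissonWeight μ y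
      = ∑' y : Fin N → ℕ,
          (∑ i, (y i : ℝ) * (h i y - h i (Function.update y i (y i - 1)))) *
            poissonWeight μ y)
    ∧ ((∀ i (y : Fin N → ℕ) (k l : ℕ), k ≤ l →
          h i (Function.update y i k) ≤ h i (Function.update y i l)) →
        0 ≤ ∑' y : Fin N → ℕ,
            (∑ i, (y i : ℝ) * (h i y - h i (Function.update y i (y i - 1)))) *
              poissonWeight μ y) := by
  classical
  have hwnn : ∀ y, 0 ≤ poissonWeight μ y := weight_nonneg hμ
  have hCb : ∀ i, ∃ C : ℝ, 0 ≤ C ∧ ∀ y, |h i y| ≤ C := by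
    intro i
    obtain ⟨C, hC⟩ := hbdd i
    exact ⟨C, le_trans (abs_nonneg _) (hC fun _ => 0), hC⟩
  choose C hC0 hC using hCb
  have habs : ∀ (i : Fin N) (f : (Fin N → ℕ) → ℝ), (∀ y, |f y| ≤ C i) →
      Summable (fun y : Fin N → ℕ => (y i : ℝ) * f y * poissonWeight μ y) := by
    intro i f hf
    have hb : Summable (fun y : Fin N → ℕ => C i * ((y i : ℝ) * poissonWeight μ y)) :=
      (summable_coord μ hμ i).mul_left _
    refine Summable.of_abs (Summable.of_nonneg_of_le (fun y => abs_nonneg _) (fun y => ?_) hb)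
    rw [abs_mul, abs_mul, abs_of_nonneg (hwnn y), Nat.abs_cast]
    have h1 : (y i : ℝ) * |f y| * poissonWeight μ y
        ≤ (y i : ℝ) * C i * poissonWeight μ y :=
      mul_le_mul_of_nonneg_right
        (mul_le_mul_of_nonneg_left (hf y) (Nat.cast_nonneg _)) (hwnn y)
    calc (y i : ℝ) * |f y| * poissonWeight μ y
        ≤ (y i : ℝ) * C i * poissonWeight μ y := h1
      _ = C i * ((y i : ℝ) * poissonWeight μ y) := by ring
  have ha : ∀ i, Summable (fun y : Fin N → ℕ => (y i : ℝ) * h i y * poissonWeight μ y) :=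
    fun i => habs i (h i) (hC i)
  have hc : ∀ i, Summable (fun y : Fin N → ℕ =>
      (y i : ℝ) * h i (Function.update y i (y i - 1)) * poissonWeight μ y) :=
    fun i => habs i _ (fun y => hC i _)
  have hb : ∀ i, Summable (fun y : Fin N → ℕ => μ i * h i y * poissonWeight μ y) := by
    intro i
    have hb' : Summable (fun y : Fin N → ℕ => (μ i * C i) * poissonWeight μ y) :=
      (summable_weight μ hμ).mul_left _
    refine Summable.of_abs (Summable.of_nonneg_of_le (fun y => abs_nonneg _) (fun y => ?_) hb')
    rw [abs_mul, abs_mul, abs_of_nonneg (hwnn y), abs_of_nonneg (hμ i).le, mul_assoc, mul_assoc]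
    exact mul_le_mul_of_nonneg_left
      (mul_le_mul_of_nonneg_right (hC i y) (hwnn y)) (hμ i).le
  constructor
  · have e1 : (∑' y : Fin N → ℕ, (∑ i, (y i : ℝ) * h i y) * poissonWeight μ y)
        = ∑ i, ∑' y : Fin N → ℕ, (y i : ℝ) * h i y * poissonWeight μ y := by
      rw [← Summable.tsum_finsetSum (fun i _ => ha i)]
      exact tsum_congr fun y => Finset.sum_mul _ _ _
    have e2 : (∑' y : Fin N → ℕ, (∑ i, μ i * h i y) * poissonWeight μ y)
        = ∑ i, ∑' y : Fin N → ℕ, μ i * h i y * poissonWeight μ y := by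
      rw [← Summable.tsum_finsetSum (fun i _ => hb i)]
      exact tsum_congr fun y => Finset.sum_mul _ _ _
    have e3 : (∑' y : Fin N → ℕ,
          (∑ i, (y i : ℝ) * (h i y - h i (Function.update y i (y i - 1)))) *
            poissonWeight μ y)
        = ∑ i, ((∑' y : Fin N → ℕ, (y i : ℝ) * h i y * poissonWeight μ y)
            - ∑' y : Fin N → ℕ,
                (y i : ℝ) * h i (Function.update y i (y i - 1)) * poissonWeight μ y) := by
      have hpt : ∀ y : Fin N → ℕ,
          (∑ i, (y i : ℝ) * (h i y - h i (Function.update y i (y i - 1)))) *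
              poissonWeight μ y
            = ∑ i, ((y i : ℝ) * h i y * poissonWeight μ y
                - (y i : ℝ) * h i (Function.update y i (y i - 1)) * poissonWeight μ y) := by
        intro y
        rw [Finset.sum_mul]
        exact Finset.sum_congr rfl fun i _ => by ring
      rw [tsum_congr hpt, Summable.tsum_finsetSum (fun i _ => (ha i).sub (hc i))]
      exact Finset.sum_congr rfl fun i _ => Summable.tsum_sub (ha i) (hc i)
    rw [e1, e2, e3, ← Finset.sum_sub_distrib]
    exact Finset.sum_congr rfl fun i _ => by rw [stein hμ i (h i)]
  · intro hmono
    refine tsum_nonneg fun y => mul_nonneg (Finset.sum_nonneg fun i _ => ?_) (hwnn y)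
    refine mul_nonneg (Nat.cast_nonneg _) (sub_nonneg.2 ?_)
    have := hmono i y (y i - 1) (y i) (Nat.sub_le _ _)
    rwa [Function.update_eq_self] at this
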